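/- Let λ₀, b > 0, and let g : [0,b] → ℝ be a bounded measurable density that is continuous at b with g(b) > 0. Then as t → ∞, the integral ∫₀^b g(x)·(e^{tx}-1)/x dx is asymptotically equivalent to (g(b)/b)·e^{bt}/t, i.e., the ratio of the two quantities tends to 1. -/

import Mathlib

set_option maxHeartbeats 1000000
open Real MeasureTheory Filter

lemma aux_poly (c : ℝ) (hc : 0 < c) (n : ℕ) :
    Tendsto (fun t : ℝ => t ^ n * Real.exp (-(c * t))) atTop (nhds 0) := by
  have h1 : Tendsto (fun t : ℝ => c * t) atTop atTop := tendsto_id.const_mul_atTop hc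
  have h2 := (tendsto_pow_mul_exp_neg_atTop_nhds_zero n).comp h1
  have h3 : Tendsto (fun t : ℝ => (1/c^n) * ((c*t)^n * Real.exp (-(c*t)))) atTop (nhds ((1/c^n) * 0)) := h2.const_mul _
  simp only [mul_zero] at h3
  refine h3.congr (fun t => ?_)
  field_simp
  ring

lemma aux_expint (t c d : ℝ) (ht : t ≠ 0) :
    ∫ x in c..d, (Real.exp (t * x) - 1) = (Real.exp (t * d) - Real.exp (t * c)) / t - (d - c) := by
  have h : ∀ x ∈ Set.uIcc c d, HasDerivAt (fun y => Real.exp (t * y) / t - y) (Real.exp (t * x) - 1) x := by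
    intro x _
    have := ((Real.hasDerivAt_exp (t * x)).comp x ((hasDerivAt_id x).const_mul t))
    have h2 := (this.div_const t).sub (hasDerivAt_id x)
    simp only [Function.comp] at h2
    refine h2.congr_deriv ?_
    rw [mul_one, mul_div_assoc, div_self ht, mul_one]
  have hint : IntervalIntegrable (fun x => Real.exp (t * x) - 1) volume c d :=
    ((Real.continuous_exp.comp (continuous_const.mul continuous_id)).sub continuous_const).intervalIntegrable c d
  rw [intervalIntegral.integral_eq_sub_of_hasDerivAt h hint]
  ring

lemma aux_pt (G t d x gx : ℝ) (ht : 0 < t) (hx : 0 ≤ x) (hxd : x ≤ d)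
    (hg0 : 0 ≤ gx) (hgG : gx ≤ G) :
    gx * (Real.exp (t * x) - 1) / x ≤ G * (t * Real.exp (t * d)) := by
  have hG : 0 ≤ G := le_trans hg0 hgG
  have hd : 0 ≤ d := le_trans hx hxd
  rcases eq_or_lt_of_le hx with h0 | h0
  · simp [← h0]
    positivity
  · have hE1 : 0 ≤ Real.exp (t * x) - 1 := by
      nlinarith [Real.add_one_le_exp (t * x), mul_pos ht h0]
    rw [div_le_iff₀ h0]
    have hprod : Real.exp (t * x) * Real.exp (-(t * x)) = 1 := by
      rw [← Real.exp_add]; simp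
    have h1 : Real.exp (t * x) - 1 ≤ t * x * Real.exp (t * x) := by
      nlinarith [mul_le_mul_of_nonneg_left (Real.add_one_le_exp (-(t * x))) (Real.exp_pos (t*x)).le]
    have h2 : Real.exp (t * x) ≤ Real.exp (t * d) := Real.exp_le_exp.2 (by nlinarith)
    calc gx * (Real.exp (t * x) - 1) ≤ G * (Real.exp (t * x) - 1) :=
          mul_le_mul_of_nonneg_right hgG hE1
      _ ≤ G * (t * x * Real.exp (t * x)) := mul_le_mul_of_nonneg_left h1 hG
      _ ≤ G * (t * x * Real.exp (t * d)) := by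
          have := mul_le_mul_of_nonneg_left h2 (by positivity : 0 ≤ G * (t * x))
          nlinarith
      _ = G * (t * Real.exp (t * d)) * x := by ring

lemma aux_int (b G t : ℝ) (hb : 0 < b) (ht : 0 < t) (g : ℝ → ℝ) (hmeas : Measurable g)
    (hbdd : ∀ x ∈ Set.Icc 0 b, 0 ≤ g x ∧ g x ≤ G) :
    IntegrableOn (fun x => g x * (Real.exp (t * x) - 1) / x) (Set.Icc 0 b) := by
  have hG : 0 ≤ G := le_trans (hbdd 0 ⟨le_refl 0, hb.le⟩).1 (hbdd 0 ⟨le_refl 0, hb.le⟩).2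
  have hmeas2 : Measurable (fun x => g x * (Real.exp (t * x) - 1) / x) :=
    (hmeas.mul ((Real.measurable_exp.comp (measurable_const.mul measurable_id)).sub
      measurable_const)).div measurable_id
  refine Integrable.mono' (g := fun _ => G * (t * Real.exp (t * b)))
    (integrableOn_const measure_Icc_lt_top.ne) hmeas2.aestronglyMeasurable ?_
  refine (ae_restrict_iff' measurableSet_Icc).2 (ae_of_all _ (fun x hx => ?_))
  have hnn : 0 ≤ g x * (Real.exp (t * x) - 1) / x := by
    rcases eq_or_lt_of_le hx.1 with h0 | h0
    · simp [← h0]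
    · have hE1 : 0 ≤ Real.exp (t * x) - 1 := by
        nlinarith [Real.add_one_le_exp (t * x), mul_pos ht h0]
      have := (hbdd x hx).1
      positivity
  rw [Real.norm_eq_abs, abs_of_nonneg hnn]
  exact aux_pt G t b x (g x) ht hx.1 hx.2 (hbdd x hx).1 (hbdd x hx).2

theorem stmt_3 (lam0 b G : ℝ) (hlam0 : 0 < lam0) (hb : 0 < b)
    (g : ℝ → ℝ) (hmeas : Measurable g)
    (hbdd : ∀ x ∈ Set.Icc 0 b, 0 ≤ g x ∧ g x ≤ G)
    (hcont : ContinuousWithinAt g (Set.Icc 0 b) b)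
    (hgb : 0 < g b) :
    Tendsto (fun t : ℝ =>
        (∫ x in (0:ℝ)..b, g x * (Real.exp (t * x) - 1) / x) /
          ((g b / b) * Real.exp (b * t) / t))
      atTop (nhds 1) := by
  have hG : 0 ≤ G := le_trans (hbdd 0 ⟨le_refl 0, hb.le⟩).1 (hbdd 0 ⟨le_refl 0, hb.le⟩).2
  rw [Metric.tendsto_nhds]
  intro ε hε
  set ε₀ : ℝ := min ε 1 / 2 with hε₀def
  have hε₀pos : 0 < ε₀ := by
    have : 0 < min ε 1 := lt_min hε one_pos
    positivity
  have hε₀le : ε₀ ≤ 1/2 := by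
    have : min ε 1 ≤ 1 := min_le_right ε 1
    rw [hε₀def]; linarith
  have hε₀ε : ε₀ < ε := by
    have h1 : min ε 1 ≤ ε := min_le_left ε 1
    rw [hε₀def]; linarith
  set ε₁ : ℝ := ε₀ * g b / 4 with hε₁def
  have hε₁pos : 0 < ε₁ := by positivity
  obtain ⟨δ₁, hδ₁pos, hδ₁⟩ := Metric.continuousWithinAt_iff.1 hcont ε₁ hε₁pos
  set δ : ℝ := min (δ₁/2) (b * ε₀ / 8) with hδdef
  have hδpos : 0 < δ := lt_min (by linarith) (by positivity)
  have hδle : δ ≤ b * ε₀ / 8 := min_le_right _ _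
  have hδδ₁ : δ < δ₁ := lt_of_le_of_lt (min_le_left _ _) (by linarith)
  have hδb : δ < b := by nlinarith
  set c : ℝ := b - δ with hcdef
  have hcpos : 0 < c := by rw [hcdef]; linarith
  -- limit functions
  set L : ℝ → ℝ := fun t => (1 - ε₀/4) * (1 - Real.exp (-(δ*t)) - δ * t * Real.exp (-(b*t))) with hLdef
  set U : ℝ → ℝ := fun t => (1 + ε₀/4) * (b/c) *
      (1 - Real.exp (-(δ*t)) - δ * t * Real.exp (-(b*t))) +
      (G * b^2 / g b) * (t^2 * Real.exp (-(δ*t))) with hUdef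
  have hexpδ : Tendsto (fun t : ℝ => Real.exp (-(δ*t))) atTop (nhds 0) := by
    have := aux_poly δ hδpos 0
    simpa using this
  have htb : Tendsto (fun t : ℝ => δ * t * Real.exp (-(b*t))) atTop (nhds 0) := by
    have h := (aux_poly b hb 1).const_mul δ
    simp only [mul_zero] at h
    exact h.congr (fun t => by ring)
  have ht2 : Tendsto (fun t : ℝ => t^2 * Real.exp (-(δ*t))) atTop (nhds 0) := aux_poly δ hδpos 2
  have hcore : Tendsto (fun t : ℝ => 1 - Real.exp (-(δ*t)) - δ * t * Real.exp (-(b*t)))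
      atTop (nhds 1) := by
    have h := (tendsto_const_nhds (x := (1:ℝ)) (f := atTop)).sub hexpδ |>.sub htb
    simpa using h
  have hLlim : Tendsto L atTop (nhds (1 - ε₀/4)) := by
    have h := hcore.const_mul (1 - ε₀/4)
    simpa [hLdef] using h
  have hUlim : Tendsto U atTop (nhds ((1 + ε₀/4) * (b/c))) := by
    have h := (hcore.const_mul ((1 + ε₀/4) * (b/c))).add (ht2.const_mul (G * b^2 / g b))
    simpa [hUdef, mul_assoc] using h
  have hL1 : 1 - ε₀ < 1 - ε₀/4 := by linarith
  have hU1 : (1 + ε₀/4) * (b/c) < 1 + ε₀ := by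
    rw [show (1+ε₀/4) * (b/c) = ((1+ε₀/4)*b)/c by ring, div_lt_iff₀ hcpos]
    nlinarith
  have hLev := hLlim.eventually (eventually_gt_nhds hL1)
  have hUev := hUlim.eventually (eventually_lt_nhds hU1)
  filter_upwards [hLev, hUev, eventually_gt_atTop (0:ℝ)] with t hLt hUt ht
  -- per-t estimates
  have hIcc : IntegrableOn (fun x => g x * (Real.exp (t * x) - 1) / x) (Set.Icc 0 b) :=
    aux_int b G t hb ht g hmeas hbdd
  have hii : ∀ u v : ℝ, 0 ≤ u → u ≤ v → v ≤ b →
      IntervalIntegrable (fun x => g x * (Real.exp (t * x) - 1) / x) volume u v := by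
    intro u v hu huv hvb
    exact (hIcc.mono_set (by rw [Set.uIcc_of_le huv]; exact Set.Icc_subset_Icc hu hvb)).intervalIntegrable
  set f : ℝ → ℝ := fun x => g x * (Real.exp (t * x) - 1) / x with hfdef
  set I₁ : ℝ := ∫ x in (0:ℝ)..c, f x with hI₁def
  set I₂ : ℝ := ∫ x in c..b, f x with hI₂def
  have hsplit : (∫ x in (0:ℝ)..b, f x) = I₁ + I₂ :=
    (intervalIntegral.integral_add_adjacent_intervals (hii 0 c (le_refl 0) hcpos.le (by linarith))
      (hii c b hcpos.le (by linarith) (le_refl b))).symm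
  -- I₁ bounds
  have hI₁nn : 0 ≤ I₁ := by
    refine intervalIntegral.integral_nonneg (by linarith) (fun x hx => ?_)
    rcases eq_or_lt_of_le hx.1 with h0 | h0
    · simp [hfdef, ← h0]
    · have hE1 : 0 ≤ Real.exp (t * x) - 1 := by
        nlinarith [Real.add_one_le_exp (t * x), mul_pos ht h0]
      have := (hbdd x ⟨hx.1, by linarith [hx.2]⟩).1
      simp only [hfdef]
      positivity
  have hI₁ub : I₁ ≤ G * (t * Real.exp (t * c)) * b := by
    have h1 : I₁ ≤ ∫ _x in (0:ℝ)..c, G * (t * Real.exp (t * c)) := by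
      refine intervalIntegral.integral_mono_on (by linarith) (hii 0 c (le_refl 0) hcpos.le (by linarith))
        intervalIntegrable_const (fun x hx => ?_)
      exact aux_pt G t c x (g x) ht hx.1 hx.2 (hbdd x ⟨hx.1, by linarith [hx.2]⟩).1
        (hbdd x ⟨hx.1, by linarith [hx.2]⟩).2
    rw [intervalIntegral.integral_const, smul_eq_mul] at h1
    have : (c - 0) * (G * (t * Real.exp (t * c))) ≤ G * (t * Real.exp (t * c)) * b := by
      have : 0 ≤ G * (t * Real.exp (t * c)) := by positivity
      nlinarith
    linarith
  -- I₂ bounds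
  set K : ℝ := (Real.exp (t * b) - Real.exp (t * c)) / t - (b - c) with hKdef
  have hKint : (∫ x in c..b, (Real.exp (t * x) - 1)) = K := aux_expint t c b (ne_of_gt ht)
  have hgbound : ∀ x ∈ Set.Icc c b, g b - ε₁ ≤ g x ∧ g x ≤ g b + ε₁ := by
    intro x hx
    have hx0 : x ∈ Set.Icc 0 b := ⟨by linarith [hx.1], hx.2⟩
    have hdist : dist x b < δ₁ := by
      rw [Real.dist_eq, abs_lt]
      constructor <;> [linarith [hx.1]; linarith [hx.2]]
    have := hδ₁ hx0 hdist
    rw [Real.dist_eq, abs_lt] at this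
    constructor <;> linarith [this.1, this.2]
  have hptlow : ∀ x ∈ Set.Icc c b, (g b - ε₁)/b * (Real.exp (t * x) - 1) ≤ f x := by
    intro x hx
    have hx0 : 0 < x := lt_of_lt_of_le hcpos hx.1
    have hE1 : 0 ≤ Real.exp (t * x) - 1 := by
      nlinarith [Real.add_one_le_exp (t * x), mul_pos ht hx0]
    have hgx := (hgbound x hx).1
    have hml : 0 < g b - ε₁ := by rw [hε₁def]; nlinarith
    have hdiv : (g b - ε₁)/b ≤ g x / x := by
      rw [div_le_div_iff₀ hb hx0]
      nlinarith [hx.2]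
    calc (g b - ε₁)/b * (Real.exp (t * x) - 1) ≤ g x / x * (Real.exp (t * x) - 1) :=
          mul_le_mul_of_nonneg_right hdiv hE1
      _ = f x := by rw [hfdef]; ring
  have hpthigh : ∀ x ∈ Set.Icc c b, f x ≤ (g b + ε₁)/c * (Real.exp (t * x) - 1) := by
    intro x hx
    have hx0 : 0 < x := lt_of_lt_of_le hcpos hx.1
    have hE1 : 0 ≤ Real.exp (t * x) - 1 := by
      nlinarith [Real.add_one_le_exp (t * x), mul_pos ht hx0]
    have hgx := (hgbound x hx).2
    have hg0 := (hbdd x ⟨by linarith, hx.2⟩).1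
    have hdiv : g x / x ≤ (g b + ε₁)/c := by
      rw [div_le_div_iff₀ hx0 hcpos]
      nlinarith [hx.1]
    calc f x = g x / x * (Real.exp (t * x) - 1) := by rw [hfdef]; ring
      _ ≤ (g b + ε₁)/c * (Real.exp (t * x) - 1) := mul_le_mul_of_nonneg_right hdiv hE1
  have hexpii : IntervalIntegrable (fun x => Real.exp (t * x) - 1) volume c b :=
    ((Real.continuous_exp.comp (continuous_const.mul continuous_id)).sub continuous_const).intervalIntegrable c b
  have hI₂low : (g b - ε₁)/b * K ≤ I₂ := by
    have h := intervalIntegral.integral_mono_on (by linarith : c ≤ b)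
      (hexpii.const_mul ((g b - ε₁)/b)) (hii c b hcpos.le (by linarith) (le_refl b)) hptlow
    rwa [intervalIntegral.integral_const_mul, hKint] at h
  have hI₂high : I₂ ≤ (g b + ε₁)/c * K := by
    have h := intervalIntegral.integral_mono_on (by linarith : c ≤ b)
      (hii c b hcpos.le (by linarith) (le_refl b)) (hexpii.const_mul ((g b + ε₁)/c)) hpthigh
    rwa [intervalIntegral.integral_const_mul, hKint] at h
  -- ratio manipulation
  set S : ℝ := b * t / (g b * Real.exp (b * t)) with hSdef
  have hSpos : 0 < S := by positivity
  have hratio : (∫ x in (0:ℝ)..b, g x * (Real.exp (t * x) - 1) / x) /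
      ((g b / b) * Real.exp (b * t) / t) = (I₁ + I₂) * S := by
    rw [show (∫ x in (0:ℝ)..b, g x * (Real.exp (t * x) - 1) / x) = ∫ x in (0:ℝ)..b, f x from rfl,
      hsplit, hSdef]
    rw [div_eq_iff (by positivity : (g b / b) * Real.exp (b * t) / t ≠ 0)]
    field_simp
  have hexpc : Real.exp (t * c) = Real.exp (b * t) * Real.exp (-(δ * t)) := by
    rw [← Real.exp_add, hcdef]; ring_nf
  -- lower bound
  have hlow : L t ≤ (I₁ + I₂) * S := by
    have h1 : (g b - ε₁)/b * K * S ≤ (I₁ + I₂) * S :=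
      mul_le_mul_of_nonneg_right (by linarith) hSpos.le
    have h2 : (g b - ε₁)/b * K * S = L t := by
      simp only [hKdef, hSdef, hLdef, hε₁def]
      rw [hexpc, show t * b = b * t by ring]
      have h3 : Real.exp (-(b*t)) = 1 / Real.exp (b*t) := by
        rw [Real.exp_neg]; exact inv_eq_one_div _
      rw [h3]
      field_simp
      ring
    linarith
  -- upper bound
  have hhigh : (I₁ + I₂) * S ≤ U t := by
    have h1 : (I₁ + I₂) * S ≤ (G * (t * Real.exp (t * c)) * b + (g b + ε₁)/c * K) * S :=
      mul_le_mul_of_nonneg_right (by linarith) hSpos.le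
    have h2 : (G * (t * Real.exp (t * c)) * b + (g b + ε₁)/c * K) * S = U t := by
      simp only [hKdef, hSdef, hUdef, hε₁def]
      rw [hexpc, show t * b = b * t by ring]
      have h3 : Real.exp (-(b*t)) = 1 / Real.exp (b*t) := by
        rw [Real.exp_neg]; exact inv_eq_one_div _
      rw [h3]
      field_simp
      ring
    exact le_of_le_of_eq h1 h2
  rw [hratio, Real.dist_eq, abs_lt]
  constructor <;> nlinarith
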